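/- Let μ be a probability measure on ℝ^m and let α, β be probability measures on ℝ^m × ℝ^d with finite second moments whose first marginals both equal μ, with disintegrations (α_y) and (β_y) with respect to μ. Let γ be a coupling of α and β that is concentrated on the diagonal set {((y,x),(y',x')) : y = y'}, i.e., γ-almost surely the two conditioning components coincide. Then ∫ ‖x − x'‖² dγ((y,x),(y',x')) ≥ ∫_{ℝ^m} W₂²(α_y, β_y) dμ(y). -/

import Mathlib

open MeasureTheory ProbabilityTheory
open scoped ENNReal

noncomputable section

/-- `ℝ^k` with the Euclidean norm. -/
abbrev Euc (k : ℕ) := EuclideanSpace ℝ (Fin k)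

/-- Squared 2-Wasserstein distance (quadratic transport cost) between measures on `ℝ^d`. -/
def W2sq {d : ℕ} (p q : Measure (Euc d)) : ℝ≥0∞ :=
  ⨅ (γ : Measure (Euc d × Euc d)) (_ : γ.fst = p ∧ γ.snd = q),
    ∫⁻ z, (‖z.1 - z.2‖₊ : ℝ≥0∞) ^ 2 ∂γ

/-- Pushing a compProd along a map of the second coordinate. -/
lemma compProd_map_right {X Y Z : Type*} [MeasurableSpace X] [MeasurableSpace Y]
    [MeasurableSpace Z] (μ : Measure X) [SFinite μ] (κ : Kernel X Y) [IsSFiniteKernel κ]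
    {g : Y → Z} (hg : Measurable g) :
    μ.compProd (κ.map g) = (μ.compProd κ).map (Prod.map id g) := by
  ext t ht
  rw [Measure.map_apply (measurable_id.prodMap hg) ht, Measure.compProd_apply ht,
    Measure.compProd_apply ((measurable_id.prodMap hg) ht)]
  refine lintegral_congr fun y => ?_
  rw [Kernel.map_apply' _ hg _ (measurable_prodMk_left ht)]
  rfl

/-- Lower bound via conditional optimal transport: a coupling `γ` of `α = μ ⊗ α_•` and
`β = μ ⊗ β_•` which is concentrated on the diagonal `{y = y'}` has next-state transport
cost at least the integrated conditional squared Wasserstein distance: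
`∫ ‖x − x'‖² dγ ≥ ∫ W₂²(α_y, β_y) dμ(y)`. -/
theorem diagonal_coupling_cost_lower_bound {m d : ℕ}
    (μ : Measure (Euc m)) [IsProbabilityMeasure μ]
    (α β : Measure (Euc m × Euc d)) [IsProbabilityMeasure α] [IsProbabilityMeasure β]
    (hα2 : ∫⁻ z, ((‖z.1‖₊ : ℝ≥0∞) ^ 2 + (‖z.2‖₊ : ℝ≥0∞) ^ 2) ∂α < ∞)
    (hβ2 : ∫⁻ z, ((‖z.1‖₊ : ℝ≥0∞) ^ 2 + (‖z.2‖₊ : ℝ≥0∞) ^ 2) ∂β < ∞)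
    (hαfst : α.fst = μ) (hβfst : β.fst = μ)
    (αk βk : Kernel (Euc m) (Euc d)) [IsMarkovKernel αk] [IsMarkovKernel βk]
    (hαdis : α = μ.compProd αk) (hβdis : β = μ.compProd βk)
    (γ : Measure ((Euc m × Euc d) × (Euc m × Euc d)))
    (hγ : γ.fst = α ∧ γ.snd = β)
    (hdiag : γ {w : (Euc m × Euc d) × (Euc m × Euc d) | w.1.1 ≠ w.2.1} = 0) :
    ∫⁻ y, W2sq (αk y) (βk y) ∂μ ≤
      ∫⁻ w : (Euc m × Euc d) × (Euc m × Euc d), (‖w.1.2 - w.2.2‖₊ : ℝ≥0∞) ^ 2 ∂γ := by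
  obtain ⟨hγfst, hγsnd⟩ := hγ
  -- γ is a probability measure
  haveI : IsProbabilityMeasure γ := by
    constructor
    have : γ.fst Set.univ = γ Set.univ := by
      rw [Measure.fst_apply MeasurableSet.univ, Set.preimage_univ]
    rw [← this, hγfst, measure_univ]
  -- the map T
  set T : ((Euc m × Euc d) × (Euc m × Euc d)) → Euc m × (Euc d × Euc d) :=
    fun w => (w.1.1, (w.1.2, w.2.2)) with hTdef
  have hT : Measurable T :=
    (measurable_fst.fst).prodMk ((measurable_fst.snd).prodMk measurable_snd.snd)
  set ν : Measure (Euc m × (Euc d × Euc d)) := γ.map T with hνdef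
  haveI : IsProbabilityMeasure ν := Measure.isProbabilityMeasure_map hT.aemeasurable
  have hνfst : ν.fst = μ := by
    rw [hνdef, Measure.fst, Measure.map_map measurable_fst hT]
    have : (Prod.fst ∘ T) = (Prod.fst ∘ (Prod.fst :
        ((Euc m × Euc d) × (Euc m × Euc d)) → Euc m × Euc d)) := rfl
    rw [this, ← Measure.map_map measurable_fst measurable_fst]
    rw [← Measure.fst, ← Measure.fst, hγfst, hαfst]
  set κ := ν.condKernel with hκdef
  have hdis : μ.compProd κ = ν := by
    rw [← hνfst]; exact ν.disintegrate ν.condKernel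
  -- first marginal kernel
  have hfstκ : μ.compProd κ.fst = α := by
    rw [Kernel.fst_eq, compProd_map_right μ κ measurable_fst, hdis, hνdef,
      Measure.map_map (measurable_id.prodMap measurable_fst) hT]
    have : (Prod.map id Prod.fst ∘ T) = (Prod.fst :
        ((Euc m × Euc d) × (Euc m × Euc d)) → Euc m × Euc d) := rfl
    rw [this, ← Measure.fst, hγfst]
  have hsndκ : μ.compProd κ.snd = β := by
    rw [Kernel.snd_eq, compProd_map_right μ κ measurable_snd, hdis, hνdef,
      Measure.map_map (measurable_id.prodMap measurable_snd) hT]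
    have h1 : (Prod.map id Prod.snd ∘ T) =
        fun w : ((Euc m × Euc d) × (Euc m × Euc d)) => (w.1.1, w.2.2) := rfl
    rw [h1]
    have h2 : γ.map (fun w : ((Euc m × Euc d) × (Euc m × Euc d)) => (w.1.1, w.2.2))
        = γ.map (fun w => (w.2.1, w.2.2)) := by
      apply Measure.map_congr
      filter_upwards [ae_iff.mpr hdiag] with w hw
      show (w.1.1, w.2.2) = (w.2.1, w.2.2)
      rw [hw]
    rw [h2]
    have h3 : (fun w : ((Euc m × Euc d) × (Euc m × Euc d)) => (w.2.1, w.2.2)) =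
        (Prod.snd : ((Euc m × Euc d) × (Euc m × Euc d)) → Euc m × Euc d) := rfl
    rw [h3, ← Measure.snd, hγsnd]
  -- a.e. identification of marginal kernels
  have hαae : ∀ᵐ y ∂μ, κ.fst y = αk y := by
    have h1 : ∀ᵐ y ∂α.fst, κ.fst y = α.condKernel y :=
      eq_condKernel_of_measure_eq_compProd _ (by rw [hαfst, hfstκ])
    have h2 : ∀ᵐ y ∂α.fst, αk y = α.condKernel y :=
      eq_condKernel_of_measure_eq_compProd _ (by rw [hαfst, ← hαdis])
    rw [hαfst] at h1 h2
    filter_upwards [h1, h2] with y hy1 hy2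
    rw [hy1, hy2]
  have hβae : ∀ᵐ y ∂μ, κ.snd y = βk y := by
    have h1 : ∀ᵐ y ∂β.fst, κ.snd y = β.condKernel y :=
      eq_condKernel_of_measure_eq_compProd _ (by rw [hβfst, hsndκ])
    have h2 : ∀ᵐ y ∂β.fst, βk y = β.condKernel y :=
      eq_condKernel_of_measure_eq_compProd _ (by rw [hβfst, ← hβdis])
    rw [hβfst] at h1 h2
    filter_upwards [h1, h2] with y hy1 hy2
    rw [hy1, hy2]
  -- conclude
  have key : ∫⁻ w, (‖w.1.2 - w.2.2‖₊ : ℝ≥0∞) ^ 2 ∂γ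
      = ∫⁻ y, ∫⁻ p, (‖p.1 - p.2‖₊ : ℝ≥0∞) ^ 2 ∂(κ y) ∂μ := by
    have hcost : Measurable fun z : Euc m × (Euc d × Euc d) =>
        (‖z.2.1 - z.2.2‖₊ : ℝ≥0∞) ^ 2 :=
      ((measurable_snd.fst.sub measurable_snd.snd).nnnorm.coe_nnreal_ennreal).pow_const 2
    rw [show (∫⁻ w, (‖w.1.2 - w.2.2‖₊ : ℝ≥0∞) ^ 2 ∂γ)
        = ∫⁻ z, (‖z.2.1 - z.2.2‖₊ : ℝ≥0∞) ^ 2 ∂ν by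
      rw [hνdef, lintegral_map hcost hT]]
    rw [← hdis, Measure.lintegral_compProd hcost]
  rw [key]
  refine lintegral_mono_ae ?_
  filter_upwards [hαae, hβae] with y hy1 hy2
  refine iInf_le_of_le (κ y) (iInf_le_of_le ⟨?_, ?_⟩ le_rfl)
  · rw [← hy1, Kernel.fst_apply]; rfl
  · rw [← hy2, Kernel.snd_apply]; rfl
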